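/- For all integers n ≥ k ≥ 3, the maximum size of a family of paths (each a subgraph of the complete graph K_n, of arbitrary length) that are pairwise C_k-creating equals the maximum size of a family of Hamiltonian paths of K_n that are pairwise C_k-creating. -/

import Mathlib

open SimpleGraph

/-- `G` contains a cycle of length `k` as a subgraph. -/
def ContainsCycleLen {V : Type*} (G : SimpleGraph V) (k : ℕ) : Prop :=
  ∃ (u : V) (w : G.Walk u u), w.IsCycle ∧ w.length = k

/-- `H` is a Hamiltonian path of the complete graph on `Fin n`:
it is the path graph on `n` vertices up to a relabeling of the vertices. -/
def IsHamPathGraph {n : ℕ} (H : SimpleGraph (Fin n)) : Prop :=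
  ∃ σ : Equiv.Perm (Fin n), ∀ a b, H.Adj a b ↔ (pathGraph n).Adj (σ a) (σ b)

/-- The maximum size of a family of Hamiltonian paths of `K_n` that are
pairwise `C_k`-creating. -/
noncomputable def Hnum (n k : ℕ) : ℕ :=
  sSup {m | ∃ F : Finset (SimpleGraph (Fin n)), F.card = m ∧
    (∀ G ∈ F, IsHamPathGraph G) ∧
    ∀ G₁ ∈ F, ∀ G₂ ∈ F, G₁ ≠ G₂ → ContainsCycleLen (G₁ ⊔ G₂) k}

/-- `H` is a perfect matching (as a graph): every vertex has a unique neighbor. -/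
def IsPMGraph {V : Type*} (H : SimpleGraph V) : Prop :=
  ∀ v : V, ∃! w : V, H.Adj v w

/-- The maximum size of a family of perfect matchings of `K_n` that are
pairwise `C_k`-creating. -/
noncomputable def Mnum (n k : ℕ) : ℕ :=
  sSup {m | ∃ F : Finset (SimpleGraph (Fin n)), F.card = m ∧
    (∀ G ∈ F, IsPMGraph G) ∧
    ∀ G₁ ∈ F, ∀ G₂ ∈ F, G₁ ≠ G₂ → ContainsCycleLen (G₁ ⊔ G₂) k}

/-- `H` is a path (of arbitrary length): its edges are exactly the edges of
some path in the complete graph. -/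
def IsPathGraph {n : ℕ} (H : SimpleGraph (Fin n)) : Prop :=
  ∃ (u v : Fin n) (p : (⊤ : SimpleGraph (Fin n)).Walk u v), p.IsPath ∧
    ∀ a b, H.Adj a b ↔ s(a, b) ∈ p.edges

/-- The maximum size of a family of pairwise `C_k`-creating paths equals the
maximum size of a family of pairwise `C_k`-creating Hamiltonian paths. -/

lemma aux_edge_mem_iff {V : Type*} {G : SimpleGraph V} :
    ∀ {u v : V} (p : G.Walk u v) (a b : V),
    s(a,b) ∈ p.edges ↔ ∃ i : ℕ,
      (p.support[i]? = some a ∧ p.support[i+1]? = some b) ∨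
      (p.support[i]? = some b ∧ p.support[i+1]? = some a) := by
  intro u v p
  induction p with
  | nil =>
    intro a b
    simp only [SimpleGraph.Walk.edges_nil, List.not_mem_nil, SimpleGraph.Walk.support_nil,
      false_iff]
    rintro ⟨i, hi⟩
    rcases hi with ⟨h1, h2⟩ | ⟨h1, h2⟩ <;>
    · have : i = 0 := by
        by_contra hne
        rw [List.getElem?_eq_none] at h1
        · simp at h1
        · simp; omega
      subst this; simp at h2
  | @cons x y w h q ih =>
    intro a b
    simp only [SimpleGraph.Walk.edges_cons, List.mem_cons, SimpleGraph.Walk.support_cons]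
    constructor
    · rintro (he | he)
      · rw [Sym2.eq_iff] at he
        refine ⟨0, ?_⟩
        have hy : q.support[0]? = some y := by
          rw [q.support_eq_cons]; simp
        rcases he with ⟨rfl, rfl⟩ | ⟨rfl, rfl⟩
        · left; exact ⟨by simp, by simpa using hy⟩
        · right; exact ⟨by simp, by simpa using hy⟩
      · obtain ⟨i, hi⟩ := (ih a b).1 he
        exact ⟨i + 1, by simpa using hi⟩
    · rintro ⟨i, hi⟩
      match i with
      | 0 =>
        have hy : q.support[0]? = some y := by rw [q.support_eq_cons]; simp
        rcases hi with ⟨h1, h2⟩ | ⟨h1, h2⟩ <;>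
          simp only [List.getElem?_cons_zero, Option.some.injEq] at h1 <;>
          simp only [show (0:ℕ)+1 = 1 from rfl, List.getElem?_cons_succ] at h2 <;>
          rw [hy] at h2 <;> injection h2 with h2
        · left; rw [h1, h2]
        · left; rw [h1, h2, Sym2.eq_swap]
      | (j+1) =>
        right
        apply (ih a b).2
        refine ⟨j, ?_⟩
        simpa using hi


lemma aux_pathGraph_acyclic (n : ℕ) : (pathGraph n).IsAcyclic := by
  intro u c hc
  -- maximal vertex of the support
  classical
  have hsupne : c.support ≠ [] := c.support_ne_nil
  set s : Finset (Fin n) := c.support.toFinset with hs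
  have hsne : s.Nonempty := by
    refine ⟨u, ?_⟩
    rw [hs, List.mem_toFinset]
    exact c.start_mem_support
  set m : Fin n := s.max' hsne with hm
  have hmmem : m ∈ c.support := List.mem_toFinset.1 (s.max'_mem hsne)
  have hmax : ∀ x ∈ c.support, x ≤ m := by
    intro x hx
    exact s.le_max' x (by rwa [hs, List.mem_toFinset])
  -- rotate the cycle to start at m
  set c' := c.rotate m hmmem with hc'
  have hc'cyc : c'.IsCycle := hc.rotate hmmem
  have hmax' : ∀ x ∈ c'.support, x ≤ m := by
    intro x hx
    rcases List.mem_cons.1 (by rwa [c'.support_eq_cons] at hx) with rfl | hx'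
    · exact le_refl _
    · have hperm := SimpleGraph.Walk.support_rotate c m hmmem
      have : x ∈ c.support.tail := (hperm.mem_iff).1 hx'
      exact hmax x (List.mem_of_mem_tail this)
  -- decompose c' = cons h q
  clear_value c'
  clear hc' hmax hmmem hc hsupne hs hm
  cases c' with
  | nil => exact hc'cyc.ne_nil rfl
  | @cons _ y _ h q =>
    rw [SimpleGraph.Walk.cons_isCycle_iff] at hc'cyc
    obtain ⟨hqpath, hnotmem⟩ := hc'cyc
    -- y < m and y+1 = m
    have hy : y ∈ (SimpleGraph.Walk.cons h q).support := by
      simp [SimpleGraph.Walk.support_cons, q.start_mem_support]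
    have hym : (y : ℕ) + 1 = (m : ℕ) := by
      rcases pathGraph_adj.1 h with h1 | h1
      · exfalso
        have := hmax' y hy
        omega
      · exact h1
    -- last edge of q
    have hmy : m ≠ y := h.ne
    obtain ⟨y', h', q'', hq⟩ := (q.reverse).exists_eq_cons_of_ne hmy
    have hy'mem : y' ∈ (SimpleGraph.Walk.cons h q).support := by
      have : y' ∈ q.reverse.support := by
        rw [hq]; simp [SimpleGraph.Walk.support_cons, q''.start_mem_support]
      rw [SimpleGraph.Walk.support_reverse] at this
      simp [SimpleGraph.Walk.support_cons, List.mem_reverse.1 this]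
    have hy'm : (y' : ℕ) + 1 = (m : ℕ) := by
      rcases pathGraph_adj.1 h' with h1 | h1
      · exfalso
        have := hmax' y' hy'mem
        omega
      · exact h1
    have : y = y' := by
      apply Fin.ext; omega
    subst this
    -- s(m, y) ∈ q.edges, contradiction
    apply hnotmem
    have : s(m, y) ∈ q.reverse.edges := by
      rw [hq]; simp [SimpleGraph.Walk.edges_cons]
    rwa [SimpleGraph.Walk.edges_reverse, List.mem_reverse] at this







lemma aux_ccl_mono {V : Type*} {G H : SimpleGraph V} (h : G ≤ H) {k : ℕ}
    (hc : ContainsCycleLen G k) : ContainsCycleLen H k := by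
  obtain ⟨u, w, hw, hl⟩ := hc
  exact ⟨u, w.mapLe h, hw.mapLe h, by
    simpa [SimpleGraph.Walk.mapLe, SimpleGraph.Walk.length_map] using hl⟩

lemma aux_ham_acyclic {n : ℕ} {H : SimpleGraph (Fin n)} (h : IsHamPathGraph H)
    {k : ℕ} : ¬ ContainsCycleLen H k := by
  obtain ⟨σ, hσ⟩ := h
  rintro ⟨u, w, hw, -⟩
  let φ : H ≃g pathGraph n := ⟨σ, fun {a b} => (hσ a b).symm⟩
  exact aux_pathGraph_acyclic n (w.map φ.toHom)
    (hw.map (Equiv.injective σ))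

lemma aux_exists_walk {V : Type*} {G : SimpleGraph V} :
    ∀ (l : List V) (a : V), List.Chain G.Adj a l →
    ∃ (b : V) (w : G.Walk a b), w.support = a :: l := by
  intro l
  induction l with
  | nil => exact fun a _ => ⟨a, SimpleGraph.Walk.nil, rfl⟩
  | cons c l ih =>
    intro a hch
    rw [show List.Chain G.Adj a (c :: l) ↔ _ from List.chain_cons] at hch
    obtain ⟨b, w, hw⟩ := ih c hch.2
    exact ⟨b, SimpleGraph.Walk.cons hch.1 w, by simp [hw]⟩

lemma aux_extend {n : ℕ} {H : SimpleGraph (Fin n)} (h : IsPathGraph H) :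
    ∃ H', IsHamPathGraph H' ∧ H ≤ H' := by
  classical
  obtain ⟨u, v, p, hp, hH⟩ := h
  set l₀ := p.support with hl₀
  have hnd₀ : l₀.Nodup := hp.support_nodup
  set rest := (Finset.univ \ l₀.toFinset).sort (· ≤ ·) with hrest
  set l := l₀ ++ rest with hl
  have hnd : l.Nodup := by
    refine List.Nodup.append hnd₀ (Finset.sort_nodup _ _) ?_
    intro a ha ha'
    have : a ∈ Finset.univ \ l₀.toFinset := (Finset.mem_sort _).1 ha'
    rw [Finset.mem_sdiff] at this
    exact this.2 (List.mem_toFinset.2 ha)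
  have hlen₀ : l₀.length ≤ n := by
    simpa using hnd₀.length_le_card
  have hlen : l.length = n := by
    rw [hl, List.length_append, hrest, Finset.length_sort, Finset.card_sdiff_of_subset
      (Finset.subset_univ _), List.toFinset_card_of_nodup hnd₀]
    simp only [Finset.card_univ, Fintype.card_fin]
    omega
  set τ : Fin n → Fin n := fun i => l.get (Fin.cast hlen.symm i) with hτ
  have hinj : Function.Injective τ := by
    intro i j hij
    have := List.nodup_iff_injective_get.1 hnd hij
    rw [Fin.ext_iff] at this ⊢
    exact this
  have hbij : Function.Bijective τ := Finite.injective_iff_bijective.1 hinj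
  set e := Equiv.ofBijective τ hbij with he
  set σ := e.symm with hσ
  refine ⟨(pathGraph n).comap σ, ⟨σ, fun a b => Iff.rfl⟩, ?_⟩
  have key : ∀ (i : ℕ) (a : Fin n), l₀[i]? = some a →
      ∃ hi : i < n, σ a = ⟨i, hi⟩ := by
    intro i a hia
    have hil : i < l₀.length := by
      by_contra hc
      rw [List.getElem?_eq_none (by omega)] at hia
      simp at hia
    have hin : i < n := lt_of_lt_of_le hil hlen₀
    refine ⟨hin, ?_⟩
    have hla : l[i]? = some a := by
      rw [hl, List.getElem?_append, if_pos hil]; exact hia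
    have : τ ⟨i, hin⟩ = a := by
      obtain ⟨hh, hv⟩ := List.getElem?_eq_some_iff.1 hla
      exact hv
    rw [hσ, Equiv.symm_apply_eq, he]
    exact this.symm
  intro a b hab
  obtain ⟨i, hi⟩ := (aux_edge_mem_iff p a b).1 ((hH a b).1 hab)
  have : (pathGraph n).Adj (σ a) (σ b) := by
    rcases hi with ⟨h1, h2⟩ | ⟨h1, h2⟩
    · obtain ⟨hi1, ha⟩ := key i a h1
      obtain ⟨hi2, hb⟩ := key (i+1) b h2
      rw [pathGraph_adj, ha, hb]
      left; rfl
    · obtain ⟨hi1, hb⟩ := key i b h1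
      obtain ⟨hi2, ha⟩ := key (i+1) a h2
      rw [pathGraph_adj, ha, hb]
      right; rfl
  exact this

lemma aux_ham_isPath {n : ℕ} (hn : 0 < n) {H : SimpleGraph (Fin n)}
    (h : IsHamPathGraph H) : IsPathGraph H := by
  classical
  obtain ⟨σ, hσ⟩ := h
  set l : List (Fin n) := (List.finRange n).map σ.symm with hl
  have hnd : l.Nodup := (List.nodup_finRange n).map σ.symm.injective
  have hlen : l.length = n := by simp [hl]
  have hlne : l ≠ [] := by
    intro hc; rw [hc] at hlen; simp at hlen; omega
  have hgl : ∀ (i : ℕ) (a : Fin n), l[i]? = some a ↔ ∃ hi : i < n, σ a = ⟨i, hi⟩ := by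
    intro i a
    constructor
    · intro hla
      obtain ⟨hh, hv⟩ := List.getElem?_eq_some_iff.1 hla
      have hin : i < n := by rwa [hlen] at hh
      refine ⟨hin, ?_⟩
      subst hv
      simp [hl, Fin.ext_iff]
    · rintro ⟨hin, hsa⟩
      have : a = σ.symm ⟨i, hin⟩ := by rw [← hsa]; simp
      subst this
      rw [List.getElem?_eq_some_iff]
      refine ⟨by rwa [hlen], ?_⟩
      simp [hl, Fin.ext_iff]
  -- build the walk
  obtain ⟨c, rest, hcr⟩ := List.exists_cons_of_ne_nil hlne
  have hch : List.Chain (⊤ : SimpleGraph (Fin n)).Adj c rest := by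
    have h1 : List.Chain' (fun a b => a ≠ b) (c :: rest) := by
      rw [← hcr]
      exact List.Pairwise.isChain hnd
    have h2 : List.Chain (fun a b : Fin n => a ≠ b) c rest := h1
    exact List.IsChain.imp (fun a b hab => by simpa using hab) h2
  obtain ⟨b, w, hw⟩ := aux_exists_walk rest c hch
  have hwsup : w.support = l := by rw [hw, hcr]
  refine ⟨c, b, w, ?_, ?_⟩
  · rw [SimpleGraph.Walk.isPath_def, hwsup]; exact hnd
  · intro a b'
    rw [hσ, aux_edge_mem_iff, pathGraph_adj]
    rw [hwsup]
    constructor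
    · intro hab
      rcases hab with hab | hab
      · refine ⟨(σ a).val, Or.inl ⟨?_, ?_⟩⟩
        · rw [hgl]; exact ⟨(σ a).isLt, by simp⟩
        · rw [hgl]
          refine ⟨by omega, ?_⟩
          rw [Fin.ext_iff]
          simpa using hab.symm
      · refine ⟨(σ b').val, Or.inr ⟨?_, ?_⟩⟩
        · rw [hgl]; exact ⟨(σ b').isLt, by simp⟩
        · rw [hgl]
          refine ⟨by omega, ?_⟩
          rw [Fin.ext_iff]
          simpa using hab.symm
    · rintro ⟨i, ⟨h1, h2⟩ | ⟨h1, h2⟩⟩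
      · obtain ⟨hi1, ha⟩ := (hgl _ _).1 h1
        obtain ⟨hi2, hb⟩ := (hgl _ _).1 h2
        left
        rw [ha, hb]
      · obtain ⟨hi1, hb⟩ := (hgl _ _).1 h1
        obtain ⟨hi2, ha⟩ := (hgl _ _).1 h2
        right
        rw [ha, hb]


theorem stmt_19 (n k : ℕ) (hk : 3 ≤ k) (hn : k ≤ n) :
    sSup {m | ∃ F : Finset (SimpleGraph (Fin n)), F.card = m ∧
      (∀ G ∈ F, IsPathGraph G) ∧
      ∀ G₁ ∈ F, ∀ G₂ ∈ F, G₁ ≠ G₂ → ContainsCycleLen (G₁ ⊔ G₂) k}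
      = Hnum n k := by
  classical
  have hn0 : 0 < n := by omega
  set PSet := {m | ∃ F : Finset (SimpleGraph (Fin n)), F.card = m ∧
      (∀ G ∈ F, IsPathGraph G) ∧
      ∀ G₁ ∈ F, ∀ G₂ ∈ F, G₁ ≠ G₂ → ContainsCycleLen (G₁ ⊔ G₂) k} with hP
  set HSet := {m | ∃ F : Finset (SimpleGraph (Fin n)), F.card = m ∧
      (∀ G ∈ F, IsHamPathGraph G) ∧
      ∀ G₁ ∈ F, ∀ G₂ ∈ F, G₁ ≠ G₂ → ContainsCycleLen (G₁ ⊔ G₂) k} with hHS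
  have hHnum : Hnum n k = sSup HSet := rfl
  have hbddP : BddAbove PSet := by
    refine ⟨Fintype.card (SimpleGraph (Fin n)), ?_⟩
    rintro m ⟨F, rfl, -, -⟩
    exact Finset.card_le_univ F
  have hbddH : BddAbove HSet := by
    refine ⟨Fintype.card (SimpleGraph (Fin n)), ?_⟩
    rintro m ⟨F, rfl, -, -⟩
    exact Finset.card_le_univ F
  have hneP : PSet.Nonempty := ⟨0, ∅, rfl, by simp, by simp⟩
  have hneH : HSet.Nonempty := ⟨0, ∅, rfl, by simp, by simp⟩
  rw [hHnum]
  apply le_antisymm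
  · apply csSup_le hneP
    rintro m ⟨F, rfl, hpath, hpair⟩
    apply le_csSup hbddH
    -- extend each path to a Hamiltonian path
    set f : SimpleGraph (Fin n) → SimpleGraph (Fin n) := fun G =>
      if h : ∃ H', IsHamPathGraph H' ∧ G ≤ H' then h.choose else ⊥ with hf
    have hfspec : ∀ G ∈ F, IsHamPathGraph (f G) ∧ G ≤ f G := by
      intro G hG
      have h : ∃ H', IsHamPathGraph H' ∧ G ≤ H' := aux_extend (hpath G hG)
      rw [hf]
      simp only [dif_pos h]
      exact h.choose_spec
    have hinj : Set.InjOn f F := by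
      intro G₁ h₁ G₂ h₂ hfeq
      by_contra hne
      have hc := hpair G₁ h₁ G₂ h₂ hne
      have hle : G₁ ⊔ G₂ ≤ f G₁ := by
        apply sup_le (hfspec G₁ h₁).2
        rw [hfeq]
        exact (hfspec G₂ h₂).2
      exact aux_ham_acyclic (hfspec G₁ h₁).1 (aux_ccl_mono hle hc)
    refine ⟨F.image f, Finset.card_image_of_injOn hinj, ?_, ?_⟩
    · intro G hG
      rw [Finset.mem_image] at hG
      obtain ⟨G₀, hG₀, rfl⟩ := hG
      exact (hfspec G₀ hG₀).1
    · intro G₁ hG₁ G₂ hG₂ hne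
      rw [Finset.mem_image] at hG₁ hG₂
      obtain ⟨A, hA, rfl⟩ := hG₁
      obtain ⟨B, hB, rfl⟩ := hG₂
      have hAB : A ≠ B := fun h => hne (by rw [h])
      exact aux_ccl_mono (sup_le_sup (hfspec A hA).2 (hfspec B hB).2)
        (hpair A hA B hB hAB)
  · apply csSup_le hneH
    rintro m ⟨F, rfl, hham, hpair⟩
    apply le_csSup hbddP
    exact ⟨F, rfl, fun G hG => aux_ham_isPath hn0 (hham G hG), hpair⟩
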